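/- Let X be a real random variable with density bounded by K, let D ≥ 0 be independent of X with E[D²] ≤ B, and let α, ε > 0. Then for every x ∈ ℝ, P(x < X ≤ x + min(αD, ε)) ≤ 2 α K √B. -/

import Mathlib

open MeasureTheory ProbabilityTheory

/-- Lemma 1 in abstract form: if `X` has density bounded by `K`, and `D ≥ 0` is independent of
    `X` with `E[D²] ≤ B`, then `P(x < X ≤ x + min(αD, ε)) ≤ 2αK√B`. -/
theorem lemma_one_abstract
    {Ω : Type*} [MeasurableSpace Ω] (μ : Measure Ω) [IsProbabilityMeasure μ]
    (X D : Ω → ℝ) (hX : Measurable X) (hD : Measurable D)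
    (f : ℝ → ℝ) (hf0 : ∀ y, 0 ≤ f y) (K : ℝ)
    (hdens : μ.map X = (volume : Measure ℝ).withDensity fun y => ENNReal.ofReal (f y))
    (hK : ∀ y, f y ≤ K)
    (hD0 : ∀ ω, 0 ≤ D ω)
    (hDint : Integrable D μ) (hD2int : Integrable (fun ω => (D ω) ^ 2) μ)
    (B : ℝ) (hB : 0 ≤ B) (hB2 : ∫ ω, (D ω) ^ 2 ∂μ ≤ B)
    (hindep : IndepFun X D μ)
    (α ε : ℝ) (hα : 0 < α) (hε : 0 < ε) (x : ℝ) :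
    (μ {ω | x < X ω ∧ X ω ≤ x + min (α * D ω) ε}).toReal ≤ 2 * α * K * Real.sqrt B := by
  have hK0 : 0 ≤ K := le_trans (hf0 0) (hK 0)
  have hEDnn : 0 ≤ ∫ ω, D ω ∂μ := integral_nonneg hD0
  -- Step 1 : Cauchy-Schwarz: E[D] ≤ √B
  have hED : ∫ ω, D ω ∂μ ≤ Real.sqrt B := by
    have hconj : Real.HolderConjugate 2 2 := Real.holderConjugate_iff.mpr ⟨one_lt_two, by norm_num⟩
    have hDmem : MemLp D (ENNReal.ofReal 2) μ := by
      rw [show ENNReal.ofReal 2 = 2 by norm_num]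
      exact (memLp_two_iff_integrable_sq hD.aestronglyMeasurable).2 hD2int
    have h1mem : MemLp (fun _ : Ω => (1 : ℝ)) (ENNReal.ofReal 2) μ := memLp_const 1
    have h := integral_mul_le_Lp_mul_Lq_of_nonneg hconj
      (Filter.Eventually.of_forall hD0)
      (Filter.Eventually.of_forall fun _ => zero_le_one) hDmem h1mem
    simp only [mul_one] at h
    have heq : ∀ ω : Ω, (D ω : ℝ) ^ (2:ℝ) = D ω ^ 2 := fun ω => by
      rw [show (2:ℝ) = ((2:ℕ):ℝ) from by norm_num, Real.rpow_natCast]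
    simp only [heq, Real.one_rpow, integral_const, measure_univ, probReal_univ, ENNReal.toReal_one,
      one_smul, mul_one] at h
    refine le_trans h ?_
    rw [Real.sqrt_eq_rpow]
    exact Real.rpow_le_rpow (integral_nonneg fun ω => sq_nonneg _) hB2 (by norm_num)
  -- Step 2 : P(x < X ≤ x + min(αD,ε)) ≤ K * α * E[D]
  have hpair : μ.map (fun ω => (D ω, X ω)) = (μ.map D).prod (μ.map X) :=
    (indepFun_iff_map_prod_eq_prod_map_map hD.aemeasurable hX.aemeasurable).1 hindep.symm
  set S : Set (ℝ × ℝ) := {p | x < p.2 ∧ p.2 ≤ x + min (α * p.1) ε} with hS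
  have hSmeas : MeasurableSet S := by
    apply MeasurableSet.inter
    · exact measurableSet_lt measurable_const measurable_snd
    · exact measurableSet_le measurable_snd
        (measurable_const.add ((measurable_const.mul measurable_fst).min measurable_const))
  have hev : {ω | x < X ω ∧ X ω ≤ x + min (α * D ω) ε} = (fun ω => (D ω, X ω)) ⁻¹' S := rfl
  have hmap : μ {ω | x < X ω ∧ X ω ≤ x + min (α * D ω) ε}
      = ((μ.map D).prod (μ.map X)) S := by
    rw [hev, ← Measure.map_apply (hD.prodMk hX) hSmeas, hpair]
  have hslice : ∀ d : ℝ, (μ.map X) (Prod.mk d ⁻¹' S)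
      ≤ ENNReal.ofReal K * ENNReal.ofReal (min (α * d) ε) := by
    intro d
    have hpre : Prod.mk d ⁻¹' S = Set.Ioc x (x + min (α * d) ε) := by
      ext y; simp [hS, Set.mem_Ioc, and_comm]
    rw [hpre, hdens, withDensity_apply _ measurableSet_Ioc]
    calc ∫⁻ y in Set.Ioc x (x + min (α * d) ε), ENNReal.ofReal (f y)
        ≤ ∫⁻ _y in Set.Ioc x (x + min (α * d) ε), ENNReal.ofReal K :=
          setLIntegral_mono measurable_const fun y _ => ENNReal.ofReal_le_ofReal (hK y)
      _ = ENNReal.ofReal K * volume (Set.Ioc x (x + min (α * d) ε)) :=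
          setLIntegral_const _ _
      _ = ENNReal.ofReal K * ENNReal.ofReal (min (α * d) ε) := by
          rw [Real.volume_Ioc, add_sub_cancel_left]
  have hmain : μ {ω | x < X ω ∧ X ω ≤ x + min (α * D ω) ε}
      ≤ ENNReal.ofReal (K * (α * ∫ ω, D ω ∂μ)) := by
    rw [hmap, Measure.prod_apply hSmeas]
    calc ∫⁻ d, (μ.map X) (Prod.mk d ⁻¹' S) ∂(μ.map D)
        ≤ ∫⁻ d, ENNReal.ofReal K * ENNReal.ofReal (min (α * d) ε) ∂(μ.map D) :=
          lintegral_mono fun d => hslice d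
      _ = ∫⁻ ω, ENNReal.ofReal K * ENNReal.ofReal (min (α * D ω) ε) ∂μ :=
          lintegral_map (f := fun d : ℝ => ENNReal.ofReal K * ENNReal.ofReal (min (α * d) ε))
            (measurable_const.mul
              (ENNReal.measurable_ofReal.comp
                ((measurable_id.const_mul α).min measurable_const))) hD
      _ ≤ ∫⁻ ω, ENNReal.ofReal K * ENNReal.ofReal (α * D ω) ∂μ := by
          refine lintegral_mono fun ω => ?_
          exact mul_le_mul_right (ENNReal.ofReal_le_ofReal (min_le_left _ _)) _
      _ = ENNReal.ofReal K * ∫⁻ ω, ENNReal.ofReal (α * D ω) ∂μ := lintegral_const_mul _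
            (ENNReal.measurable_ofReal.comp (measurable_const.mul hD))
      _ = ENNReal.ofReal K * ENNReal.ofReal (∫ ω, α * D ω ∂μ) := by
          rw [ofReal_integral_eq_lintegral_ofReal (hDint.const_mul α)
            (Filter.Eventually.of_forall fun ω => mul_nonneg hα.le (hD0 ω))]
      _ = ENNReal.ofReal (K * (α * ∫ ω, D ω ∂μ)) := by
          rw [integral_const_mul, ENNReal.ofReal_mul hK0]
  have htr : (μ {ω | x < X ω ∧ X ω ≤ x + min (α * D ω) ε}).toReal
      ≤ K * (α * ∫ ω, D ω ∂μ) :=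
    ENNReal.toReal_le_of_le_ofReal (mul_nonneg hK0 (mul_nonneg hα.le hEDnn)) hmain
  have hsB : 0 ≤ Real.sqrt B := Real.sqrt_nonneg B
  nlinarith [mul_le_mul_of_nonneg_left hED (mul_nonneg hK0 hα.le),
    mul_nonneg (mul_nonneg hα.le hK0) hsB]
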